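/- Let x∈ℝ^{n_1}×⋯×ℝ^{n_N}, z∈T(x), and for a subset I⊆{1,…,N} let x_I^+ denote the point with coordinates (x_I^+)_i = z_i for i∈I and (x_I^+)_i = x_i for i∉I. Let (q_I)_{I⊆{1,…,N}} be probability weights (q_I ≥ 0, ∑_I q_I = 1) such that ∑_{I∋i} q_I ≥ p_i > 0 for each i. Then ∑_I q_I · φ_Γ(x_I^+) ≤ φ_Γ(x) − ∑_{i=1}^N (p_i ξ_i/(2γ_i))‖z_i − x_i‖², where ξ_i = (N − γ_i L_{f_i})/N; in particular the FBE decreases in expectation by at least (σ/2)‖x − z‖²_{Γ^{-1}} with σ = min_i p_i ξ_i. -/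

import Mathlib

open Filter Topology Metric Bornology Set
open scoped RealInnerProductSpace

noncomputable section

variable {N : ℕ} {E : Fin N → Type*}
  [∀ i, NormedAddCommGroup (E i)] [∀ i, InnerProductSpace ℝ (E i)]
  [∀ i, CompleteSpace (E i)]

/-- `F(x) = (1/N) ∑ᵢ fᵢ(xᵢ)`, the smooth separable part of the cost. -/
def Fsum (f : ∀ i, E i → ℝ) (x : PiLp 2 E) : ℝ := (N : ℝ)⁻¹ * ∑ i, f i (x i)

/-- `Φ = F + G`, the total cost, extended-real-valued. -/
def Phi (f : ∀ i, E i → ℝ) (G : PiLp 2 E → EReal) (x : PiLp 2 E) : EReal :=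
  ((Fsum f x : ℝ) : EReal) + G x

/-- The model `M(w,x) = F(x) + ⟨∇F(x),w-x⟩ + G(w) + ½‖w-x‖²_{Γ⁻¹}`, where `∇F(x)ᵢ = f'ᵢ(xᵢ)/N`
and `Γ = blockdiag(γ₁ I, …, γ_N I)`. -/
def Mdl (f : ∀ i, E i → ℝ) (f' : ∀ i, E i → E i) (γ : Fin N → ℝ)
    (G : PiLp 2 E → EReal) (w x : PiLp 2 E) : EReal :=
  ((Fsum f x + (N : ℝ)⁻¹ * ∑ i, ⟪f' i (x i), w i - x i⟫
      + 2⁻¹ * ∑ i, (γ i)⁻¹ * ‖w i - x i‖ ^ 2 : ℝ) : EReal) + G w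

/-- The forward-backward operator `T(x) = argmin_w M(w,x)`. -/
def Tmap (f : ∀ i, E i → ℝ) (f' : ∀ i, E i → E i) (γ : Fin N → ℝ)
    (G : PiLp 2 E → EReal) (x : PiLp 2 E) : Set (PiLp 2 E) :=
  {z | ∀ w, Mdl f f' γ G z x ≤ Mdl f f' γ G w x}

/-- The `Γ⁻¹`-proximal mapping
`prox_G^{Γ⁻¹}(u) = argmin_w { G(w) + ½‖w-u‖²_{Γ⁻¹} }`. -/
def proxSet (γ : Fin N → ℝ) (G : PiLp 2 E → EReal) (u : PiLp 2 E) : Set (PiLp 2 E) :=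
  {z | ∀ w, G z + ((2⁻¹ * ∑ i, (γ i)⁻¹ * ‖z i - u i‖ ^ 2 : ℝ) : EReal)
        ≤ G w + ((2⁻¹ * ∑ i, (γ i)⁻¹ * ‖w i - u i‖ ^ 2 : ℝ) : EReal)}

/-- The forward (gradient) step `x - Γ∇F(x)`. -/
def fwd (f' : ∀ i, E i → E i) (γ : Fin N → ℝ) (x : PiLp 2 E) : PiLp 2 E :=
  WithLp.toLp 2 (fun i => x i - (γ i * (N : ℝ)⁻¹) • f' i (x i))

/-- Convexity for an extended-real-valued function. -/
def ERealConvex {X : Type*} [AddCommMonoid X] [Module ℝ X] (G : X → EReal) : Prop :=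
  ∀ x y : X, ∀ a b : ℝ, 0 ≤ a → 0 ≤ b → a + b = 1 →
    G (a • x + b • y) ≤ (a : ℝ) * G x + (b : ℝ) * G y

/-- The regular (Fréchet) subdifferential `∂̂h(x)` of an extended-real-valued function. -/
def frechetSubdiff {X : Type*} [NormedAddCommGroup X] [InnerProductSpace ℝ X]
    (h : X → EReal) (x : X) : Set X :=
  {v | h x ≠ ⊤ ∧ h x ≠ ⊥ ∧ ∀ ε : ℝ, 0 < ε →
      ∀ᶠ w in 𝓝 x, h x + ((⟪v, w - x⟫ - ε * ‖w - x‖ : ℝ) : EReal) ≤ h w}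

/-- The limiting subdifferential `∂h(x)`. -/
def limitingSubdiff {X : Type*} [NormedAddCommGroup X] [InnerProductSpace ℝ X]
    (h : X → EReal) (x : X) : Set X :=
  {v | ∃ u w : ℕ → X, (∀ k, w k ∈ frechetSubdiff h (u k)) ∧
      Tendsto u atTop (𝓝 x) ∧ Tendsto (fun k => h (u k)) atTop (𝓝 (h x)) ∧
      Tendsto w atTop (𝓝 v)}

/-- The Kurdyka-Łojasiewicz property with exponent `θ` (at every point of `dom ∂h`),
with desingularizing function `ψ(s) = ϱ s^{1-θ}`. -/
def HasKLExponent {X : Type*} [NormedAddCommGroup X] [InnerProductSpace ℝ X]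
    (h : X → EReal) (θ : ℝ) : Prop :=
  ∀ xb : X, (limitingSubdiff h xb).Nonempty →
    ∃ ε η ϱ : ℝ, 0 < ε ∧ 0 < η ∧ 0 < ϱ ∧
      ∀ w : X, ‖w - xb‖ < ε → h xb < h w → h w < h xb + ((η : ℝ) : EReal) →
        ∀ v ∈ limitingSubdiff h w,
          1 ≤ ϱ * (1 - θ) * (h w - h xb).toReal ^ (-θ) * ‖v‖

lemma descent_lemma {X : Type*} [NormedAddCommGroup X] [InnerProductSpace ℝ X]
    [CompleteSpace X]
    (f : X → ℝ) (f' : X → X) (L : ℝ)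
    (hf : ∀ u, HasGradientAt f (f' u) u)
    (hlip : ∀ u v, ‖f' u - f' v‖ ≤ L * ‖u - v‖) (x z : X) :
    f z ≤ f x + ⟪f' x, z - x⟫ + L / 2 * ‖z - x‖ ^ 2 := by
  set d := z - x with hd
  have key : ∀ t : ℝ, HasDerivAt (fun t : ℝ => f (x + t • d)) ⟪f' (x + t • d), d⟫ t := by
    intro t
    have h1 : HasDerivAt (fun t : ℝ => x + t • d) d t := by
      simpa using ((hasDerivAt_id t).smul_const d).const_add x
    have h2 := (hf (x + t • d)).hasFDerivAt.comp_hasDerivAt t h1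
    simp at h2
    exact h2
  set h : ℝ → ℝ := fun t => f (x + t • d) - t * ⟪f' x, d⟫ - L / 2 * t ^ 2 * ‖d‖ ^ 2 with hh
  have hderiv : ∀ t : ℝ, HasDerivAt h (⟪f' (x + t • d), d⟫ - ⟪f' x, d⟫ - L * t * ‖d‖ ^ 2) t := by
    intro t
    have := ((key t).sub ((hasDerivAt_id t).mul_const ⟪f' x, d⟫)).sub
      (((hasDerivAt_pow 2 t).const_mul (L / 2)).mul_const (‖d‖ ^ 2))
    exact this.congr_deriv (by ring)
  have hmono : AntitoneOn h (Set.Icc 0 1) := by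
    apply antitoneOn_of_deriv_nonpos (convex_Icc 0 1)
    · exact (continuous_iff_continuousAt.mpr
        (fun t => (hderiv t).differentiableAt.continuousAt)).continuousOn
    · intro t _
      exact (hderiv t).differentiableAt.differentiableWithinAt
    · intro t ht
      rw [interior_Icc] at ht
      rw [(hderiv t).deriv]
      have hb : ⟪f' (x + t • d) - f' x, d⟫ ≤ L * t * ‖d‖ ^ 2 := by
        calc ⟪f' (x + t • d) - f' x, d⟫ ≤ ‖f' (x + t • d) - f' x‖ * ‖d‖ :=
              real_inner_le_norm _ _
          _ ≤ (L * ‖x + t • d - x‖) * ‖d‖ := by gcongr; exact hlip _ _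
          _ = L * t * ‖d‖ ^ 2 := by
              rw [add_sub_cancel_left, norm_smul, Real.norm_eq_abs, abs_of_pos ht.1]; ring
      rw [inner_sub_left] at hb
      linarith
  have := hmono (Set.mem_Icc.mpr ⟨le_refl 0, zero_le_one⟩)
    (Set.mem_Icc.mpr ⟨zero_le_one, le_refl 1⟩) zero_le_one
  simp only [hh] at this
  have e0 : x + (0:ℝ) • d = x := by simp
  have e1 : x + (1:ℝ) • d = z := by simp [hd]
  rw [e0, e1] at this
  nlinarith [this]

lemma swap_sum {N : ℕ} (q : Finset (Fin N) → ℝ) (t : Fin N → ℝ) :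
    ∑ I : Finset (Fin N), q I * ∑ i, (if i ∈ I then t i else 0)
      = ∑ i, (∑ I ∈ Finset.univ.filter (fun I : Finset (Fin N) => i ∈ I), q I) * t i := by
  simp_rw [Finset.mul_sum, mul_ite, mul_zero]
  rw [Finset.sum_comm]
  refine Finset.sum_congr rfl fun i _ => ?_
  rw [Finset.sum_mul, Finset.sum_filter]


/-- randomized one-step descent in expectation, cf. (3.3)-(3.4):
for sampling weights q_I with ∑_{I∋i} q_I ≥ p_i > 0, the expected FBE after one BC update
decreases by ∑ᵢ pᵢξᵢ/(2γᵢ)‖zᵢ-xᵢ‖², hence by (σ/2)‖x-z‖²_{Γ⁻¹} with σ = minᵢ pᵢξᵢ. -/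
theorem bc_randomized_expected_descent (hN : 0 < N)
    (f : ∀ i, E i → ℝ) (f' : ∀ i, E i → E i) (L γ : Fin N → ℝ)
    (G : PiLp 2 E → EReal)
    (hf : ∀ i (u : E i), HasGradientAt (f i) (f' i u) u)
    (hL : ∀ i, 0 ≤ L i)
    (hlip : ∀ i (u v : E i), ‖f' i u - f' i v‖ ≤ L i * ‖u - v‖)
    (hγ : ∀ i, 0 < γ i) (hγL : ∀ i, γ i * L i < (N : ℝ))
    (hGlsc : LowerSemicontinuous G)
    (hGproper : ∃ w, G w ≠ ⊤) (hGbot : ∀ w, G w ≠ ⊥)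
    (hargmin : ∃ xs : PiLp 2 E, ∀ w, Phi f G xs ≤ Phi f G w)
    (φ : PiLp 2 E → ℝ)
    (hφ : ∀ x, ((φ x : ℝ) : EReal) = ⨅ w, Mdl f f' γ G w x)
    (p : Fin N → ℝ) (hp : ∀ i, 0 < p i)
    (q : Finset (Fin N) → ℝ) (hq0 : ∀ I, 0 ≤ q I)
    (hq1 : ∑ I : Finset (Fin N), q I = 1)
    (hpq : ∀ i : Fin N, p i ≤ ∑ I ∈ Finset.univ.filter (fun I : Finset (Fin N) => i ∈ I), q I)
    (x z : PiLp 2 E) (hz : z ∈ Tmap f f' γ G x) :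
    (∑ I : Finset (Fin N), q I * φ (WithLp.toLp 2 (fun i => if i ∈ I then z i else x i))
        ≤ φ x - ∑ i, p i * (((N : ℝ) - γ i * L i) / (N : ℝ)) / (2 * γ i) * ‖z i - x i‖ ^ 2) ∧
    (∑ I : Finset (Fin N), q I * φ (WithLp.toLp 2 (fun i => if i ∈ I then z i else x i))
        ≤ φ x - (Finset.univ.inf' (Finset.univ_nonempty_iff.mpr ⟨⟨0, hN⟩⟩)
              (fun i => p i * (((N : ℝ) - γ i * L i) / (N : ℝ)))) / 2
            * ∑ i, (γ i)⁻¹ * ‖x i - z i‖ ^ 2) := by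
  have hNR : (0:ℝ) < (N:ℝ) := by exact_mod_cast hN
  have hNne : (N:ℝ) ≠ 0 := hNR.ne'
  have hξpos : ∀ i, 0 < ((N:ℝ) - γ i * L i) / (N:ℝ) :=
    fun i => div_pos (by linarith [hγL i]) hNR
  have hcpos : ∀ i, 0 < ((N:ℝ) - γ i * L i) / (N:ℝ) / (2 * γ i) :=
    fun i => div_pos (hξpos i) (by linarith [hγ i])
  have factA : ∀ y w, ((φ y : ℝ) : EReal) ≤ Mdl f f' γ G w y := by
    intro y w; rw [hφ y]; exact iInf_le _ w
  have factB : ((φ x : ℝ) : EReal) = Mdl f f' γ G z x := by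
    rw [hφ x]; exact le_antisymm (iInf_le _ z) (le_iInf hz)
  have hGzt : G z ≠ ⊤ := by
    intro h
    apply EReal.coe_ne_top (φ x)
    rw [factB]
    unfold Mdl
    rw [h]
    exact EReal.coe_add_top _
  have hg : G z = ((G z).toReal : ℝ) := (EReal.coe_toReal hGzt (hGbot z)).symm
  set g : ℝ := (G z).toReal with hgdef
  have hMdl : ∀ y, Mdl f f' γ G z y
      = ((Fsum f y + (N : ℝ)⁻¹ * ∑ i, ⟪f' i (y i), z i - y i⟫
          + 2⁻¹ * ∑ i, (γ i)⁻¹ * ‖z i - y i‖ ^ 2 + g : ℝ) : EReal) := by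
    intro y
    unfold Mdl
    rw [hg, ← EReal.coe_add]
  have hφx : φ x = Fsum f x + (N : ℝ)⁻¹ * ∑ i, ⟪f' i (x i), z i - x i⟫
      + 2⁻¹ * ∑ i, (γ i)⁻¹ * ‖z i - x i‖ ^ 2 + g := by
    have := factB.trans (hMdl x)
    exact_mod_cast this
  have hkey : ∀ I : Finset (Fin N), φ (WithLp.toLp 2 (fun i => if i ∈ I then z i else x i))
      ≤ φ x - ∑ i, (if i ∈ I then ((N:ℝ) - γ i * L i) / (N:ℝ) / (2 * γ i) * ‖z i - x i‖ ^ 2 else 0) := by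
    intro I
    set y : PiLp 2 E := WithLp.toLp 2 (fun i => if i ∈ I then z i else x i) with hy
    have h1 : φ y ≤ Fsum f y + (N : ℝ)⁻¹ * ∑ i, ⟪f' i (y i), z i - y i⟫
        + 2⁻¹ * ∑ i, (γ i)⁻¹ * ‖z i - y i‖ ^ 2 + g := by
      have := (factA y z).trans_eq (hMdl y)
      exact_mod_cast this
    refine h1.trans ?_
    rw [hφx]
    have hterm : ∀ i ∈ Finset.univ,
        (N:ℝ)⁻¹ * f i (y i) + (N:ℝ)⁻¹ * ⟪f' i (y i), z i - y i⟫
            + 2⁻¹ * ((γ i)⁻¹ * ‖z i - y i‖ ^ 2)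
        ≤ (N:ℝ)⁻¹ * f i (x i) + (N:ℝ)⁻¹ * ⟪f' i (x i), z i - x i⟫
            + 2⁻¹ * ((γ i)⁻¹ * ‖z i - x i‖ ^ 2)
            - (if i ∈ I then ((N:ℝ) - γ i * L i) / (N:ℝ) / (2 * γ i) * ‖z i - x i‖ ^ 2 else 0) := by
      intro i _
      by_cases hi : i ∈ I
      · have hyi : y i = z i := by simp only [hy, if_pos hi]
        rw [hyi]
        simp only [if_pos hi, sub_self, inner_zero_right, norm_zero]
        have hd := descent_lemma (f i) (f' i) (L i) (hf i) (hlip i) (x i) (z i)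
        have hd2 : (N:ℝ)⁻¹ * f i (z i)
            ≤ (N:ℝ)⁻¹ * (f i (x i) + ⟪f' i (x i), z i - x i⟫ + L i / 2 * ‖z i - x i‖ ^ 2) :=
          mul_le_mul_of_nonneg_left hd (by positivity)
        have hγne : γ i ≠ 0 := (hγ i).ne'
        have heq : (N:ℝ)⁻¹ * (L i / 2) + ((N:ℝ) - γ i * L i) / (N:ℝ) / (2 * γ i)
            = 2⁻¹ * (γ i)⁻¹ := by
          field_simp
          ring
        have heq2 : 2⁻¹ * ((γ i)⁻¹ * ‖z i - x i‖ ^ 2)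
              - ((N:ℝ) - γ i * L i) / (N:ℝ) / (2 * γ i) * ‖z i - x i‖ ^ 2
            = (N:ℝ)⁻¹ * (L i / 2) * ‖z i - x i‖ ^ 2 := by
          linear_combination (-(‖z i - x i‖ ^ 2)) * heq
        nlinarith [hd2, heq2]
      · have hyi : y i = x i := by simp only [hy, if_neg hi]
        rw [hyi]
        simp [hi]
    have hsum := Finset.sum_le_sum hterm
    rw [Finset.sum_sub_distrib] at hsum
    simp only [Finset.sum_add_distrib, ← Finset.mul_sum] at hsum
    simp only [Fsum]
    linarith
  -- assemble
  have hstep1 : ∑ I : Finset (Fin N), q I * φ (WithLp.toLp 2 (fun i => if i ∈ I then z i else x i))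
      ≤ ∑ I : Finset (Fin N), q I * (φ x - ∑ i, (if i ∈ I then ((N:ℝ) - γ i * L i) / (N:ℝ) / (2 * γ i) * ‖z i - x i‖ ^ 2 else 0)) :=
    Finset.sum_le_sum fun I _ => mul_le_mul_of_nonneg_left (hkey I) (hq0 I)
  have hstep2 : ∑ I : Finset (Fin N),
      q I * (φ x - ∑ i, (if i ∈ I then ((N:ℝ) - γ i * L i) / (N:ℝ) / (2 * γ i) * ‖z i - x i‖ ^ 2 else 0))
      = φ x - ∑ I : Finset (Fin N), q I * ∑ i, (if i ∈ I then ((N:ℝ) - γ i * L i) / (N:ℝ) / (2 * γ i) * ‖z i - x i‖ ^ 2 else 0) := by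
    simp_rw [mul_sub]
    rw [Finset.sum_sub_distrib, ← Finset.sum_mul, hq1, one_mul]
  have hstep3 := swap_sum q (fun i => ((N:ℝ) - γ i * L i) / (N:ℝ) / (2 * γ i) * ‖z i - x i‖ ^ 2)
  have hstep4 : ∑ i, p i * (((N:ℝ) - γ i * L i) / (N:ℝ)) / (2 * γ i) * ‖z i - x i‖ ^ 2
      ≤ ∑ i, (∑ I ∈ Finset.univ.filter (fun I : Finset (Fin N) => i ∈ I), q I)
          * (((N:ℝ) - γ i * L i) / (N:ℝ) / (2 * γ i) * ‖z i - x i‖ ^ 2) := by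
    refine Finset.sum_le_sum fun i _ => ?_
    have h1 : p i * (((N:ℝ) - γ i * L i) / (N:ℝ)) / (2 * γ i) * ‖z i - x i‖ ^ 2
        = p i * (((N:ℝ) - γ i * L i) / (N:ℝ) / (2 * γ i) * ‖z i - x i‖ ^ 2) := by
      ring
    rw [h1]
    exact mul_le_mul_of_nonneg_right (hpq i)
      (mul_nonneg (hcpos i).le (sq_nonneg _))
  have part1 : ∑ I : Finset (Fin N), q I * φ (WithLp.toLp 2 (fun i => if i ∈ I then z i else x i))
      ≤ φ x - ∑ i, p i * (((N:ℝ) - γ i * L i) / (N:ℝ)) / (2 * γ i) * ‖z i - x i‖ ^ 2 := by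
    rw [hstep2, hstep3] at hstep1
    linarith
  refine ⟨part1, part1.trans ?_⟩
  have hσ : ∀ i : Fin N,
      Finset.univ.inf' (Finset.univ_nonempty_iff.mpr ⟨⟨0, hN⟩⟩)
          (fun i => p i * (((N : ℝ) - γ i * L i) / (N : ℝ)))
        ≤ p i * (((N : ℝ) - γ i * L i) / (N : ℝ)) :=
    fun i => Finset.inf'_le _ (Finset.mem_univ i)
  have hfin : Finset.univ.inf' (Finset.univ_nonempty_iff.mpr ⟨⟨0, hN⟩⟩)
          (fun i => p i * (((N : ℝ) - γ i * L i) / (N : ℝ))) / 2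
        * ∑ i, (γ i)⁻¹ * ‖x i - z i‖ ^ 2
      ≤ ∑ i, p i * (((N:ℝ) - γ i * L i) / (N:ℝ)) / (2 * γ i) * ‖z i - x i‖ ^ 2 := by
    rw [Finset.mul_sum]
    refine Finset.sum_le_sum fun i _ => ?_
    have hγne : γ i ≠ 0 := (hγ i).ne'
    have h1 : p i * (((N:ℝ) - γ i * L i) / (N:ℝ)) / (2 * γ i) * ‖z i - x i‖ ^ 2
        = p i * (((N : ℝ) - γ i * L i) / (N : ℝ)) * ((γ i)⁻¹ * ‖x i - z i‖ ^ 2) / 2 := by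
      rw [norm_sub_rev, div_eq_mul_inv (_ * _), mul_inv]
      ring
    rw [h1]
    have hX : 0 ≤ (γ i)⁻¹ * ‖x i - z i‖ ^ 2 :=
      mul_nonneg (inv_nonneg.mpr (hγ i).le) (sq_nonneg _)
    nlinarith [hσ i]
  linarith
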